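/- arXiv:1110.3078 — 2 statements merged into one kernel-verified Lean document; each statement's English description precedes it below -/
import Mathlib

section
/- Let a : ℕ → ℕ satisfy a(1)=1 and a(d) = (2d-1)!! − ∑_{k=1}^{d-1}(2d-2k-1)!!·a(k) for d ≥ 2. Then for all d ≥ 4, a(d) < (2d-3)·(2d-3)!!. -/
/-- The double factorial `(2d-1)!! = ∏_{i=1}^d (2i-1)`, with `(-1)!! = oddDF 0 = 1`. -/
def oddDF (d : ℕ) : ℕ := ∏ i ∈ Finset.range d, (2 * i + 1)

lemma oddDF_succ (n : ℕ) : oddDF (n+1) = oddDF n * (2*n+1) := Finset.prod_range_succ _ _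

lemma oddDF_pos (n : ℕ) : 0 < oddDF n := Finset.prod_pos (fun i _ => by positivity)

lemma oddDF_step {i j : ℕ} (h : i ≤ j) : oddDF (i+1) * oddDF j ≤ oddDF i * oddDF (j+1) := by
  calc oddDF (i+1) * oddDF j = (oddDF i * oddDF j) * (2*i+1) := by rw [oddDF_succ]; ring
    _ ≤ (oddDF i * oddDF j) * (2*j+1) := Nat.mul_le_mul_left _ (by omega)
    _ = oddDF i * oddDF (j+1) := by rw [oddDF_succ]; ring

lemma oddDF_mul_le_aux : ∀ (m j : ℕ), 4 ≤ j → 4 + m ≤ j + 1 →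
    oddDF (4+m) * oddDF j ≤ oddDF 4 * oddDF (j+m) := by
  intro m
  induction m with
  | zero => intro j _ _; simp
  | succ n ih =>
    intro j hj h
    calc oddDF (4+(n+1)) * oddDF j = oddDF ((4+n)+1) * oddDF j := by ring_nf
      _ ≤ oddDF (4+n) * oddDF (j+1) := oddDF_step (by omega)
      _ ≤ oddDF 4 * oddDF ((j+1)+n) := ih (j+1) (by omega) (by omega)
      _ = oddDF 4 * oddDF (j+(n+1)) := by ring_nf

lemma oddDF_mul_le {i j : ℕ} (hi : 4 ≤ i) (hj : 4 ≤ j) :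
    oddDF i * oddDF j ≤ oddDF 4 * oddDF (i+j-4) := by
  rcases le_total i j with h | h
  · obtain ⟨m, rfl⟩ : ∃ m, i = 4 + m := ⟨i - 4, by omega⟩
    have h2 := oddDF_mul_le_aux m j hj (by omega)
    have e : j + m = 4 + m + j - 4 := by omega
    rw [e] at h2; exact h2
  · obtain ⟨m, rfl⟩ : ∃ m, j = 4 + m := ⟨j - 4, by omega⟩
    have h2 := oddDF_mul_le_aux m i hi (by omega)
    have e : i + m = i + (4 + m) - 4 := by omega
    rw [e] at h2; rw [Nat.mul_comm (oddDF i)]; exact h2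

/-- If `a(1)=1` and `a(d) = (2d-1)!! − ∑_{k=1}^{d-1} (2d-2k-1)!!·a(k)` for `d ≥ 2`,
then `a(d) < (2d-3)·(2d-3)!!` for all `d ≥ 4`. -/
theorem a_upper_bound (a : ℕ → ℕ) (h1 : a 1 = 1)
    (hrec : ∀ d, 2 ≤ d → a d = oddDF d - ∑ k ∈ Finset.Icc 1 (d - 1), oddDF (d - k) * a k) :
    ∀ d, 4 ≤ d → a d < (2 * d - 3) * oddDF (d - 1) := by
  -- the key untruncated identity
  have key : ∀ n, 1 ≤ n → a n + ∑ k ∈ Finset.Icc 1 (n-1), oddDF (n-k) * a k = oddDF n := by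
    intro n
    induction n using Nat.strong_induction_on with
    | _ n ih =>
      intro hn
      rcases Nat.lt_or_ge n 2 with h | h
      · interval_cases n
        simp [h1, oddDF]
      · obtain ⟨e, rfl⟩ : ∃ e, n = e+2 := ⟨n-2, by omega⟩
        have hprev := ih (e+1) (by omega) (by omega)
        simp only [Nat.add_sub_cancel] at hprev
        have hsum_prev : (∑ k ∈ Finset.Icc 1 (e+1), oddDF (e+1-k) * a k) = oddDF (e+1) := by
          rw [Finset.sum_Icc_succ_top (by omega : 1 ≤ e+1)]
          have he : oddDF (e+1-(e+1)) = 1 := by simp [oddDF]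
          rw [he, one_mul, ← hprev]
          omega
        have hbound : (∑ k ∈ Finset.Icc 1 (e+1), oddDF (e+2-k) * a k) ≤ (2*e+3) * oddDF (e+1) := by
          calc (∑ k ∈ Finset.Icc 1 (e+1), oddDF (e+2-k) * a k)
              ≤ ∑ k ∈ Finset.Icc 1 (e+1), (2*e+3) * (oddDF (e+1-k) * a k) := by
                apply Finset.sum_le_sum
                intro k hk
                simp only [Finset.mem_Icc] at hk
                have h2 : e+2-k = (e+1-k)+1 := by omega
                rw [h2, oddDF_succ]
                calc oddDF (e+1-k) * (2*(e+1-k)+1) * a k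
                    ≤ oddDF (e+1-k) * (2*e+3) * a k :=
                      Nat.mul_le_mul_right _ (Nat.mul_le_mul_left _ (by omega))
                  _ = (2*e+3) * (oddDF (e+1-k) * a k) := by ring
            _ = (2*e+3) * oddDF (e+1) := by rw [← Finset.mul_sum, hsum_prev]
        have hDe2 : oddDF (e+2) = (2*e+3) * oddDF (e+1) := by
          rw [show e+2 = (e+1)+1 by omega, oddDF_succ]; ring
        have hr := hrec (e+2) (by omega)
        simp only [show e+2-1 = e+1 by omega] at hr ⊢
        rw [hr, Nat.sub_add_cancel (by rw [hDe2]; exact hbound)]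
  have haD : ∀ k, 1 ≤ k → a k ≤ oddDF k := fun k hk => Nat.le.intro (key k hk)
  -- explicit small values
  have ha2 : a 2 = 2 := by
    rw [hrec 2 (by norm_num)]
    norm_num [Finset.sum_Icc_succ_top, h1]
    rfl
  have ha3 : a 3 = 10 := by
    rw [hrec 3 (by norm_num), show (3:ℕ)-1 = 2 from rfl,
        show Finset.Icc 1 2 = {1,2} from rfl,
        Finset.sum_insert (by decide), Finset.sum_singleton, h1, ha2]
    rfl
  have ha4 : a 4 = 74 := by
    rw [hrec 4 (by norm_num), show (4:ℕ)-1 = 3 from rfl,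
        show Finset.Icc 1 3 = {1,2,3} from rfl,
        Finset.sum_insert (by decide), Finset.sum_insert (by decide), Finset.sum_singleton,
        h1, ha2, ha3]
    rfl
  have ha5 : a 5 = 706 := by
    rw [hrec 5 (by norm_num), show (5:ℕ)-1 = 4 from rfl,
        show Finset.Icc 1 4 = {1,2,3,4} from rfl,
        Finset.sum_insert (by decide), Finset.sum_insert (by decide),
        Finset.sum_insert (by decide), Finset.sum_singleton,
        h1, ha2, ha3, ha4]
    rfl
  have ha6 : a 6 = 8162 := by
    rw [hrec 6 (by norm_num), show (6:ℕ)-1 = 5 from rfl,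
        show Finset.Icc 1 5 = {1,2,3,4,5} from rfl,
        Finset.sum_insert (by decide), Finset.sum_insert (by decide),
        Finset.sum_insert (by decide), Finset.sum_insert (by decide), Finset.sum_singleton,
        h1, ha2, ha3, ha4, ha5]
    rfl
  -- the main strong induction, with lower and upper bounds with margins
  have main : ∀ d, ((2 ≤ d → (2*d-3) * oddDF (d-1) ≤ a d + 8 * oddDF (d-2)) ∧
      (4 ≤ d → a d ≤ (2*d-3) * oddDF (d-1)) ∧
      (5 ≤ d → a d + oddDF (d-2) ≤ (2*d-3) * oddDF (d-1))) := by
    intro d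
    induction d using Nat.strong_induction_on with
    | _ d ih =>
      rcases Nat.lt_or_ge d 7 with hd | hd
      · interval_cases d
        · exact ⟨fun h => by omega, fun h => by omega, fun h => by omega⟩
        · exact ⟨fun h => by omega, fun h => by omega, fun h => by omega⟩
        · exact ⟨fun _ => by rw [ha2]; decide, fun h => by omega, fun h => by omega⟩
        · exact ⟨fun _ => by rw [ha3]; decide, fun h => by omega, fun h => by omega⟩
        · exact ⟨fun _ => by rw [ha4]; decide, fun _ => by rw [ha4]; decide,
            fun h => by omega⟩
        · exact ⟨fun _ => by rw [ha5]; decide, fun _ => by rw [ha5]; decide,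
            fun _ => by rw [ha5]; decide⟩
        · exact ⟨fun _ => by rw [ha6]; decide, fun _ => by rw [ha6]; decide,
            fun _ => by rw [ha6]; decide⟩
      · -- inductive step, d = m + 7
        obtain ⟨m, rfl⟩ : ∃ m, d = m + 7 := ⟨d - 7, by omega⟩
        -- abbreviations
        have hp4 : oddDF (m+4) = (2*m+7) * oddDF (m+3) := by
          rw [show m+4 = (m+3)+1 by omega, oddDF_succ]; ring
        have hp5 : oddDF (m+5) = (2*m+9) * oddDF (m+4) := by
          rw [show m+5 = (m+4)+1 by omega, oddDF_succ]; ring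
        have hp6 : oddDF (m+6) = (2*m+11) * oddDF (m+5) := by
          rw [show m+6 = (m+5)+1 by omega, oddDF_succ]; ring
        have hp7 : oddDF (m+7) = (2*m+13) * oddDF (m+6) := by
          rw [show m+7 = (m+6)+1 by omega, oddDF_succ]; ring
        -- induction hypotheses
        have hL6 : (2*m+9) * oddDF (m+5) ≤ a (m+6) + 8 * oddDF (m+4) := by
          have h := (ih (m+6) (by omega)).1 (by omega)
          rw [show 2*(m+6)-3 = 2*m+9 by omega, show m+6-1 = m+5 by omega,
              show m+6-2 = m+4 by omega] at h
          exact h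
        have hL5 : (2*m+7) * oddDF (m+4) ≤ a (m+5) + 8 * oddDF (m+3) := by
          have h := (ih (m+5) (by omega)).1 (by omega)
          rw [show 2*(m+5)-3 = 2*m+7 by omega, show m+5-1 = m+4 by omega,
              show m+5-2 = m+3 by omega] at h
          exact h
        have hW6 : a (m+6) ≤ (2*m+9) * oddDF (m+5) := by
          have h := (ih (m+6) (by omega)).2.1 (by omega)
          rw [show 2*(m+6)-3 = 2*m+9 by omega, show m+6-1 = m+5 by omega] at h
          exact h
        have hW5 : a (m+5) ≤ (2*m+7) * oddDF (m+4) := by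
          have h := (ih (m+5) (by omega)).2.1 (by omega)
          rw [show 2*(m+5)-3 = 2*m+7 by omega, show m+5-1 = m+4 by omega] at h
          exact h
        have hW4 : a (m+4) ≤ (2*m+5) * oddDF (m+3) := by
          have h := (ih (m+4) (by omega)).2.1 (by omega)
          rw [show 2*(m+4)-3 = 2*m+5 by omega, show m+4-1 = m+3 by omega] at h
          exact h
        -- the key identity at m+7
        have hK := key (m+7) (by omega)
        rw [show m+7-1 = m+6 by omega] at hK
        -- split the sum
        have hIcc : Finset.Icc 1 (m+6) = Finset.Ioc 0 (m+6) := by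
          ext x; simp [Finset.mem_Icc, Finset.mem_Ioc]; omega
        have hs1 : (∑ k ∈ Finset.Ioc 0 3, oddDF (m+7-k) * a k)
            + (∑ k ∈ Finset.Ioc 3 (m+3), oddDF (m+7-k) * a k)
            = ∑ k ∈ Finset.Ioc 0 (m+3), oddDF (m+7-k) * a k :=
          Finset.sum_Ioc_consecutive _ (by omega) (by omega)
        have hs2 : (∑ k ∈ Finset.Ioc 0 (m+3), oddDF (m+7-k) * a k)
            + (∑ k ∈ Finset.Ioc (m+3) (m+6), oddDF (m+7-k) * a k)
            = ∑ k ∈ Finset.Ioc 0 (m+6), oddDF (m+7-k) * a k :=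
          Finset.sum_Ioc_consecutive _ (by omega) (by omega)
        have hlow : (∑ k ∈ Finset.Ioc 0 3, oddDF (m+7-k) * a k)
            = oddDF (m+6) + 2 * oddDF (m+5) + 10 * oddDF (m+4) := by
          rw [show Finset.Ioc 0 3 = {1,2,3} from rfl,
              Finset.sum_insert (by decide), Finset.sum_insert (by decide),
              Finset.sum_singleton,
              show m+7-1 = m+6 by omega, show m+7-2 = m+5 by omega,
              show m+7-3 = m+4 by omega, h1, ha2, ha3]
          ring
        have htop : (∑ k ∈ Finset.Ioc (m+3) (m+6), oddDF (m+7-k) * a k)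
            = 15 * a (m+4) + 3 * a (m+5) + a (m+6) := by
          have hset : Finset.Ioc (m+3) (m+6) = {m+4, m+5, m+6} := by
            ext x
            simp [Finset.mem_Ioc, Finset.mem_insert]
            omega
          rw [hset,
              Finset.sum_insert (by simp only [Finset.mem_insert, Finset.mem_singleton]; omega),
              Finset.sum_insert (by simp only [Finset.mem_singleton]; omega),
              Finset.sum_singleton,
              show m+7-(m+4) = 3 by omega, show m+7-(m+5) = 2 by omega,
              show m+7-(m+6) = 1 by omega,
              show oddDF 3 = 15 from rfl, show oddDF 2 = 3 from rfl,
              show oddDF 1 = 1 from rfl]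
          ring
        have hMid : (∑ k ∈ Finset.Ioc 3 (m+3), oddDF (m+7-k) * a k)
            ≤ m * (105 * oddDF (m+3)) := by
          have hb : ∀ k ∈ Finset.Ioc 3 (m+3), oddDF (m+7-k) * a k ≤ 105 * oddDF (m+3) := by
            intro k hk
            simp only [Finset.mem_Ioc] at hk
            calc oddDF (m+7-k) * a k ≤ oddDF (m+7-k) * oddDF k :=
                  Nat.mul_le_mul_left _ (haD k (by omega))
              _ ≤ oddDF 4 * oddDF ((m+7-k)+k-4) := oddDF_mul_le (by omega) (by omega)
              _ = 105 * oddDF (m+3) := by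
                  rw [show (m+7-k)+k-4 = m+3 by omega, show oddDF 4 = 105 from rfl]
          calc (∑ k ∈ Finset.Ioc 3 (m+3), oddDF (m+7-k) * a k)
              ≤ (Finset.Ioc 3 (m+3)).card * (105 * oddDF (m+3)) := by
                  have := Finset.sum_le_card_nsmul _ _ _ hb
                  simpa using this
            _ = m * (105 * oddDF (m+3)) := by rw [Nat.card_Ioc]; norm_num
        -- combined expression for the sum S
        have hS : a (m+7) + ((oddDF (m+6) + 2 * oddDF (m+5) + 10 * oddDF (m+4))
            + (∑ k ∈ Finset.Ioc 3 (m+3), oddDF (m+7-k) * a k)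
            + (15 * a (m+4) + 3 * a (m+5) + a (m+6))) = oddDF (m+7) := by
          rw [← hlow, ← htop, hs1, hs2, ← hIcc]
          exact hK
        -- upper bound on the sum (for the lower bound on a)
        have hA : (6*m+31) * oddDF (m+4) + (135*m+75) * oddDF (m+3) ≤ 8 * oddDF (m+5) := by
          rw [hp5, hp4]
          calc (6*m+31) * ((2*m+7) * oddDF (m+3)) + (135*m+75) * oddDF (m+3)
              = ((6*m+31) * (2*m+7) + (135*m+75)) * oddDF (m+3) := by ring
            _ ≤ (8 * ((2*m+9) * (2*m+7))) * oddDF (m+3) := by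
                refine Nat.mul_le_mul_right _ ?_
                calc (6*m+31) * (2*m+7) + (135*m+75)
                    ≤ (6*m+31) * (2*m+7) + (135*m+75) + (20*m^2+17*m+212) :=
                      Nat.le_add_right _ _
                  _ = 8 * ((2*m+9) * (2*m+7)) := by ring
            _ = 8 * ((2*m+9) * ((2*m+7) * oddDF (m+3))) := by ring
        have hSup : (oddDF (m+6) + 2 * oddDF (m+5) + 10 * oddDF (m+4))
            + (∑ k ∈ Finset.Ioc 3 (m+3), oddDF (m+7-k) * a k)
            + (15 * a (m+4) + 3 * a (m+5) + a (m+6))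
            ≤ 2 * oddDF (m+6) + 8 * oddDF (m+5) := by
          calc (oddDF (m+6) + 2 * oddDF (m+5) + 10 * oddDF (m+4))
              + (∑ k ∈ Finset.Ioc 3 (m+3), oddDF (m+7-k) * a k)
              + (15 * a (m+4) + 3 * a (m+5) + a (m+6))
              ≤ (oddDF (m+6) + 2 * oddDF (m+5) + 10 * oddDF (m+4))
                + m * (105 * oddDF (m+3))
                + (15 * ((2*m+5) * oddDF (m+3)) + 3 * ((2*m+7) * oddDF (m+4))
                  + (2*m+9) * oddDF (m+5)) := by
                gcongr
            _ = oddDF (m+6) + (2*m+11) * oddDF (m+5)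
                + ((6*m+31) * oddDF (m+4) + (135*m+75) * oddDF (m+3)) := by ring
            _ ≤ oddDF (m+6) + (2*m+11) * oddDF (m+5) + 8 * oddDF (m+5) := by
                exact Nat.add_le_add_left hA _
            _ = 2 * oddDF (m+6) + 8 * oddDF (m+5) := by rw [hp6]; ring
        -- lower-bound claim (first component)
        have compL : (2*(m+7)-3) * oddDF (m+7-1) ≤ a (m+7) + 8 * oddDF (m+7-2) := by
          rw [show 2*(m+7)-3 = 2*m+11 by omega, show m+7-1 = m+6 by omega,
              show m+7-2 = m+5 by omega]
          have hKX : a (m+7) + ((oddDF (m+6) + 2 * oddDF (m+5) + 10 * oddDF (m+4))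
              + (∑ k ∈ Finset.Ioc 3 (m+3), oddDF (m+7-k) * a k)
              + (15 * a (m+4) + 3 * a (m+5) + a (m+6)))
              = (2*m+11) * oddDF (m+6) + 2 * oddDF (m+6) := by
            rw [hS, hp7]; ring
          have h2 : (2*m+11) * oddDF (m+6) + 2 * oddDF (m+6)
              ≤ (a (m+7) + 8 * oddDF (m+5)) + 2 * oddDF (m+6) := by
            rw [← hKX]
            calc a (m+7) + ((oddDF (m+6) + 2 * oddDF (m+5) + 10 * oddDF (m+4))
                + (∑ k ∈ Finset.Ioc 3 (m+3), oddDF (m+7-k) * a k)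
                + (15 * a (m+4) + 3 * a (m+5) + a (m+6)))
                ≤ a (m+7) + (2 * oddDF (m+6) + 8 * oddDF (m+5)) :=
                  Nat.add_le_add_left hSup _
              _ = (a (m+7) + 8 * oddDF (m+5)) + 2 * oddDF (m+6) := by ring
          exact Nat.le_of_add_le_add_right h2
        -- upper-bound claim (third component)
        have compU : a (m+7) + oddDF (m+7-2) ≤ (2*(m+7)-3) * oddDF (m+7-1) := by
          rw [show 2*(m+7)-3 = 2*m+11 by omega, show m+7-1 = m+6 by omega,
              show m+7-2 = m+5 by omega]
          -- p6 ≤ p5 + 3 a(m+5) + a(m+6)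
          have hc2 : oddDF (m+6) + 8 * oddDF (m+4) + 24 * oddDF (m+3)
              ≤ (2*m+10) * oddDF (m+5) + (6*m+21) * oddDF (m+4) := by
            rw [hp6, hp5, hp4]
            calc (2*m+11) * ((2*m+9) * ((2*m+7) * oddDF (m+3)))
                + 8 * ((2*m+7) * oddDF (m+3)) + 24 * oddDF (m+3)
                = ((2*m+11) * ((2*m+9) * (2*m+7)) + 8 * (2*m+7) + 24) * oddDF (m+3) := by ring
              _ ≤ ((2*m+10) * ((2*m+9) * (2*m+7)) + (6*m+21) * (2*m+7)) * oddDF (m+3) := by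
                  refine Nat.mul_le_mul_right _ ?_
                  calc (2*m+11) * ((2*m+9) * (2*m+7)) + 8 * (2*m+7) + 24
                      ≤ (2*m+11) * ((2*m+9) * (2*m+7)) + 8 * (2*m+7) + 24 + (8*m^2+36*m+4) :=
                        Nat.le_add_right _ _
                    _ = (2*m+10) * ((2*m+9) * (2*m+7)) + (6*m+21) * (2*m+7) := by ring
              _ = (2*m+10) * ((2*m+9) * ((2*m+7) * oddDF (m+3)))
                  + (6*m+21) * ((2*m+7) * oddDF (m+3)) := by ring
          have hc3 : (2*m+10) * oddDF (m+5) + (6*m+21) * oddDF (m+4)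
              ≤ (oddDF (m+5) + 3 * a (m+5) + a (m+6)) + (8 * oddDF (m+4) + 24 * oddDF (m+3)) := by
            calc (2*m+10) * oddDF (m+5) + (6*m+21) * oddDF (m+4)
                = oddDF (m+5) + (2*m+9) * oddDF (m+5) + 3 * ((2*m+7) * oddDF (m+4)) := by ring
              _ ≤ oddDF (m+5) + (a (m+6) + 8 * oddDF (m+4))
                  + 3 * (a (m+5) + 8 * oddDF (m+3)) := by gcongr
              _ = (oddDF (m+5) + 3 * a (m+5) + a (m+6))
                  + (8 * oddDF (m+4) + 24 * oddDF (m+3)) := by ring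
          have hest : oddDF (m+6) ≤ oddDF (m+5) + 3 * a (m+5) + a (m+6) := by
            have h4 : oddDF (m+6) + (8 * oddDF (m+4) + 24 * oddDF (m+3))
                ≤ (oddDF (m+5) + 3 * a (m+5) + a (m+6)) + (8 * oddDF (m+4) + 24 * oddDF (m+3)) := by
              calc oddDF (m+6) + (8 * oddDF (m+4) + 24 * oddDF (m+3))
                  = oddDF (m+6) + 8 * oddDF (m+4) + 24 * oddDF (m+3) := by ring
                _ ≤ (2*m+10) * oddDF (m+5) + (6*m+21) * oddDF (m+4) := hc2
                _ ≤ _ := hc3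
            exact Nat.le_of_add_le_add_right h4
          -- now combine with hS
          have hSlo : oddDF (m+6) + 2 * oddDF (m+5) + (3 * a (m+5) + a (m+6))
              ≤ (oddDF (m+6) + 2 * oddDF (m+5) + 10 * oddDF (m+4))
              + (∑ k ∈ Finset.Ioc 3 (m+3), oddDF (m+7-k) * a k)
              + (15 * a (m+4) + 3 * a (m+5) + a (m+6)) := by
            have : (0:ℕ) ≤ 10 * oddDF (m+4) := Nat.zero_le _
            omega
          have hKX : a (m+7) + ((oddDF (m+6) + 2 * oddDF (m+5) + 10 * oddDF (m+4))
              + (∑ k ∈ Finset.Ioc 3 (m+3), oddDF (m+7-k) * a k)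
              + (15 * a (m+4) + 3 * a (m+5) + a (m+6)))
              = (2*m+11) * oddDF (m+6) + 2 * oddDF (m+6) := by
            rw [hS, hp7]; ring
          -- finish linearly
          have h5 : a (m+7) + (oddDF (m+6) + 2 * oddDF (m+5) + (3 * a (m+5) + a (m+6)))
              ≤ (2*m+11) * oddDF (m+6) + 2 * oddDF (m+6) := by
            rw [← hKX]
            exact Nat.add_le_add_left hSlo _
          -- from hest : p6 ≤ p5 + 3 a5 + a6, so 3a5 + a6 ≥ p6 - p5
          omega
        refine ⟨fun _ => compL, fun _ => ?_, fun _ => compU⟩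
        have := compU
        omega
  intro d hd
  rcases eq_or_ne d 4 with rfl | hne
  · rw [ha4]
    decide
  · have hU := (main d).2.2 (by omega)
    have hpos := oddDF_pos (d-2)
    omega
end

section
/- Let a satisfy a(1)=1, a(d) = (2d-1)!! − ∑_{k=1}^{d-1}(2d-2k-1)!!·a(k) for d ≥ 2, and let b(d) = ((2d-3)²+1)·(2d-5)!!. Then for all d ≥ 4, b(d) − a(d) > (2d-5)!!. -/
lemma oddDF_one : oddDF 1 = 1 := by decide
lemma oddDF_two : oddDF 2 = 3 := by decide
lemma oddDF_three : oddDF 3 = 15 := by decide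
lemma oddDF_four : oddDF 4 = 105 := by decide
lemma oddDF_five : oddDF 5 = 945 := by decide

lemma oddDF_mul_le_s8 (n m : ℕ) (hm : 1 ≤ m) : oddDF m * oddDF (n+1) ≤ oddDF (m+n) := by
  induction n with
  | zero => rw [oddDF_one, mul_one, Nat.add_zero]
  | succ n ih =>
    have h1 : oddDF (n+1+1) = oddDF (n+1) * (2*(n+1)+1) := oddDF_succ _
    have h2 : oddDF (m+n+1) = oddDF (m+n) * (2*(m+n)+1) := oddDF_succ _
    calc oddDF m * oddDF (n+1+1) = oddDF m * oddDF (n+1) * (2*(n+1)+1) := by rw [h1]; ring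
    _ ≤ oddDF (m+n) * (2*(m+n)+1) := Nat.mul_le_mul ih (by omega)
    _ = oddDF (m+(n+1)) := by rw [← h2]; ring_nf

lemma oddDF_mul_le3 (n m : ℕ) (hm : 2 ≤ m) : oddDF m * oddDF (n+2) ≤ 3 * oddDF (m+n) := by
  induction n with
  | zero => rw [oddDF_two, mul_comm, Nat.add_zero]
  | succ n ih =>
    have h1 : oddDF (n+2+1) = oddDF (n+2) * (2*(n+2)+1) := oddDF_succ _
    have h2 : oddDF (m+n+1) = oddDF (m+n) * (2*(m+n)+1) := oddDF_succ _
    calc oddDF m * oddDF (n+1+2) = oddDF m * oddDF (n+2) * (2*(n+2)+1) := by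
          rw [show n+1+2 = n+2+1 from rfl, h1]; ring
    _ ≤ 3 * oddDF (m+n) * (2*(m+n)+1) := Nat.mul_le_mul ih (by omega)
    _ = 3 * oddDF (m+(n+1)) := by rw [show m+(n+1) = m+n+1 from by omega, h2]; ring


section
variable (a : ℕ → ℕ) (h1 : a 1 = 1)
    (hrec : ∀ d, 2 ≤ d → a d = oddDF d - ∑ k ∈ Finset.Icc 1 (d - 1), oddDF (d - k) * a k)

include h1 hrec

lemma a_two : a 2 = 2 := by
  have h := hrec 2 (by norm_num)
  rw [show (2:ℕ)-1 = 1 from rfl, Finset.Icc_self, Finset.sum_singleton] at h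
  rw [h, oddDF_two, oddDF_one, h1]

lemma a_three : a 3 = 10 := by
  have h := hrec 3 (by norm_num)
  have he : Finset.Icc 1 (3-1) = {1, 2} := by decide
  rw [he, Finset.sum_insert (by decide), Finset.sum_singleton] at h
  rw [h, show (3:ℕ)-1 = 2 from rfl, show (3:ℕ)-2 = 1 from rfl, oddDF_three, oddDF_two, oddDF_one, h1, a_two a h1 hrec]; norm_num

lemma aux_U2 (k : ℕ) : a (k+2) + oddDF (k+1) ≤ oddDF (k+2) := by
  have h := hrec (k+2) (by omega)
  rw [show k+2-1 = k+1 from by omega] at h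
  have hone : (1:ℕ) ∈ Finset.Icc 1 (k+1) := by simp
  have hle : oddDF (k+2-1) * a 1 ≤ ∑ j ∈ Finset.Icc 1 (k+1), oddDF (k+2-j) * a j :=
    Finset.single_le_sum (f := fun j => oddDF (k+2-j) * a j) (fun i _ => Nat.zero_le _) hone
  rw [h1, mul_one, show k+2-1 = k+1 from by omega] at hle
  have hm : oddDF (k+1) ≤ oddDF (k+2) := by
    rw [oddDF_succ (k+1)]
    exact Nat.le_mul_of_pos_right _ (by omega)
  omega

lemma aux_aU (j : ℕ) : a (j+2) ≤ oddDF (j+1) * (2*j+2) := by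
  have h := aux_U2 a h1 hrec j
  have he : oddDF (j+2) = oddDF (j+1) * (2*j+2) + oddDF (j+1) := by
    rw [oddDF_succ (j+1)]; ring
  omega

lemma aux_TU1 (m : ℕ) :
    ∑ k' ∈ Finset.Icc 1 (m+1), oddDF (m+2-k') * a k' ≤ oddDF (m+1) + m * (oddDF m * (2*m)) := by
  rw [Finset.Icc_eq_cons_Ioc (by omega), Finset.sum_cons]
  have h1' : oddDF (m+2-1) * a 1 = oddDF (m+1) := by
    rw [h1, mul_one, show m+2-1 = m+1 from by omega]
  rw [h1']
  refine Nat.add_le_add_left ?_ _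
  calc ∑ k' ∈ Finset.Ioc 1 (m+1), oddDF (m+2-k') * a k'
      ≤ (Finset.Ioc 1 (m+1)).card • (oddDF m * (2*m)) := by
        refine Finset.sum_le_card_nsmul _ _ _ ?_
        intro k' hk'
        rw [Finset.mem_Ioc] at hk'
        obtain ⟨j, rfl⟩ : ∃ j, k' = j+2 := ⟨k'-2, by omega⟩
        have hj : j + 2 ≤ m + 1 := hk'.2
        calc oddDF (m+2-(j+2)) * a (j+2)
            ≤ oddDF (m-j) * (oddDF (j+1) * (2*j+2)) := by
              rw [show m+2-(j+2) = m-j from by omega]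
              exact Nat.mul_le_mul_left _ (aux_aU a h1 hrec j)
          _ = (oddDF (m-j) * oddDF (j+1)) * (2*j+2) := by ring
          _ ≤ oddDF m * (2*m) := by
              refine Nat.mul_le_mul ?_ (by omega)
              have := oddDF_mul_le_s8 j (m-j) (by omega)
              rwa [show m-j+j = m from by omega] at this
    _ = m * (oddDF m * (2*m)) := by rw [Nat.card_Ioc, smul_eq_mul, show m+1-1 = m from by omega]

lemma aux_TU2 (m : ℕ) :
    ∑ k' ∈ Finset.Icc 1 (m+4), oddDF (m+5-k') * a k'
      ≤ oddDF (m+4) + oddDF (m+3) * (2*m+8) + (m+1) * ((3 * oddDF (m+2)) * (2*m+4)) := by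
  have hsplit : Finset.Icc 1 (m+4) = insert 1 (insert 2 (insert (m+4) (Finset.Icc 3 (m+3)))) := by
    ext x
    simp only [Finset.mem_Icc, Finset.mem_insert]
    omega
  rw [hsplit, Finset.sum_insert (by simp only [Finset.mem_insert, Finset.mem_Icc]; omega),
    Finset.sum_insert (by simp only [Finset.mem_insert, Finset.mem_Icc]; omega),
    Finset.sum_insert (by simp only [Finset.mem_insert, Finset.mem_Icc]; omega)]
  have t1 : oddDF (m+5-1) * a 1 = oddDF (m+4) := by
    rw [h1, mul_one, show m+5-1 = m+4 from by omega]
  have t2 : oddDF (m+5-2) * a 2 = oddDF (m+3) * 2 := by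
    rw [a_two a h1 hrec, show m+5-2 = m+3 from by omega]
  have t3 : oddDF (m+5-(m+4)) * a (m+4) ≤ oddDF (m+3) * (2*m+6) := by
    rw [show m+5-(m+4) = 1 from by omega, oddDF_one, one_mul]
    have := aux_aU a h1 hrec (m+2)
    calc a (m+4) = a (m+2+2) := by ring_nf
      _ ≤ oddDF (m+3) * (2*(m+2)+2) := by
          have h := aux_aU a h1 hrec (m+2)
          rwa [show m+2+1 = m+3 from by omega] at h
      _ = oddDF (m+3) * (2*m+6) := by ring
  have t4 : ∑ k' ∈ Finset.Icc 3 (m+3), oddDF (m+5-k') * a k'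
      ≤ (m+1) * ((3 * oddDF (m+2)) * (2*m+4)) := by
    calc ∑ k' ∈ Finset.Icc 3 (m+3), oddDF (m+5-k') * a k'
        ≤ (Finset.Icc 3 (m+3)).card • ((3 * oddDF (m+2)) * (2*m+4)) := by
          refine Finset.sum_le_card_nsmul _ _ _ ?_
          intro k' hk'
          rw [Finset.mem_Icc] at hk'
          obtain ⟨j, rfl⟩ : ∃ j, k' = j+3 := ⟨k'-3, by omega⟩
          have hj : j ≤ m := by omega
          calc oddDF (m+5-(j+3)) * a (j+3)
              ≤ oddDF (m+2-j) * (oddDF (j+2) * (2*j+4)) := by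
                rw [show m+5-(j+3) = m+2-j from by omega]
                refine Nat.mul_le_mul_left _ ?_
                have h := aux_aU a h1 hrec (j+1)
                calc a (j+3) = a (j+1+2) := by ring_nf
                  _ ≤ oddDF (j+1+1) * (2*(j+1)+2) := h
                  _ = oddDF (j+2) * (2*j+4) := by ring_nf
            _ = (oddDF (m+2-j) * oddDF (j+2)) * (2*j+4) := by ring
            _ ≤ (3 * oddDF (m+2)) * (2*m+4) := by
                refine Nat.mul_le_mul ?_ (by omega)
                have := oddDF_mul_le3 j (m+2-j) (by omega)
                rwa [show m+2-j+j = m+2 from by omega] at this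
      _ = (m+1) * ((3 * oddDF (m+2)) * (2*m+4)) := by
          rw [Nat.card_Icc, smul_eq_mul, show m+3+1-3 = m+1 from by omega]
  calc oddDF (m+5-1) * a 1 + (oddDF (m+5-2) * a 2 + (oddDF (m+5-(m+4)) * a (m+4)
        + ∑ k' ∈ Finset.Icc 3 (m+3), oddDF (m+5-k') * a k'))
      ≤ oddDF (m+4) + (oddDF (m+3) * 2 + (oddDF (m+3) * (2*m+6)
        + (m+1) * ((3 * oddDF (m+2)) * (2*m+4)))) := by
        rw [t1, t2]
        exact Nat.add_le_add_left (Nat.add_le_add_left (add_le_add t3 t4) _) _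
    _ = oddDF (m+4) + oddDF (m+3) * (2*m+8) + (m+1) * ((3 * oddDF (m+2)) * (2*m+4)) := by ring

end


/-- If `a(1)=1`, `a(d) = (2d-1)!! − ∑_{k=1}^{d-1}(2d-2k-1)!!·a(k)` for `d ≥ 2`, and
`b(d) = ((2d-3)²+1)·(2d-5)!!`, then `b(d) − a(d) > (2d-5)!!` for all `d ≥ 4`. -/
theorem b_minus_a (a b : ℕ → ℕ) (h1 : a 1 = 1)
    (hrec : ∀ d, 2 ≤ d → a d = oddDF d - ∑ k ∈ Finset.Icc 1 (d - 1), oddDF (d - k) * a k)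
    (hb : ∀ d, b d = ((2 * d - 3) ^ 2 + 1) * oddDF (d - 2)) :
    ∀ d, 4 ≤ d → oddDF (d - 2) < b d - a d := by
  have ha2 := a_two a h1 hrec
  have ha3 := a_three a h1 hrec
  have ha4 : a 4 = 74 := by
    have h := hrec 4 (by norm_num)
    rw [show (4:ℕ)-1 = 3 from rfl] at h
    have he : Finset.Icc 1 3 = ({1,2,3} : Finset ℕ) := by decide
    rw [he, Finset.sum_insert (by decide), Finset.sum_insert (by decide),
      Finset.sum_singleton] at h
    norm_num [oddDF_four, oddDF_three, oddDF_two, oddDF_one, h1, ha2, ha3] at h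
    exact h
  intro d hd
  rw [hb d]
  rcases Nat.lt_or_ge d 6 with h6 | h6
  · interval_cases d
    · norm_num [oddDF_two, ha4]
    · have ha5 : a 5 = 706 := by
        have h := hrec 5 (by norm_num)
        rw [show (5:ℕ)-1 = 4 from rfl] at h
        have he : Finset.Icc 1 4 = ({1,2,3,4} : Finset ℕ) := by decide
        rw [he, Finset.sum_insert (by decide), Finset.sum_insert (by decide),
          Finset.sum_insert (by decide), Finset.sum_singleton] at h
        norm_num [oddDF_five, oddDF_four, oddDF_three, oddDF_two, oddDF_one, h1, ha2, ha3, ha4] at h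
        exact h
      norm_num [oddDF_three, ha5]
  · obtain ⟨e, rfl⟩ : ∃ e, d = e + 6 := ⟨d - 6, by omega⟩
    rw [show e+6-2 = e+4 from by omega, show 2*(e+6)-3 = 2*e+9 from by omega]
    -- product expansions
    have p1 : oddDF (e+3) = oddDF (e+2) * (2*e+5) := by
      rw [show e+3 = e+2+1 from by omega, oddDF_succ]; ring
    have p2 : oddDF (e+4) = oddDF (e+3) * (2*e+7) := by
      rw [show e+4 = e+3+1 from by omega, oddDF_succ]; ring
    have p3 : oddDF (e+5) = oddDF (e+4) * (2*e+9) := by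
      rw [show e+5 = e+4+1 from by omega, oddDF_succ]; ring
    have p4 : oddDF (e+6) = oddDF (e+5) * (2*e+11) := by
      rw [show e+6 = e+5+1 from by omega, oddDF_succ]; ring
    -- a (e+4) lower bound data
    have hA2 := hrec (e+4) (by omega)
    rw [show e+4-1 = e+3 from by omega] at hA2
    have hU2 := aux_TU1 a h1 hrec (e+2)
    simp only [show e+2+1 = e+3 from by omega, show e+2+2 = e+4 from by omega,
      show 2*(e+2) = 2*e+4 from by omega] at hU2
    -- a (e+5) lower bound data
    have hA1 := hrec (e+5) (by omega)
    rw [show e+5-1 = e+4 from by omega] at hA1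
    have hU1 := aux_TU2 a h1 hrec e
    -- a (e+6)
    have hS := hrec (e+6) (by omega)
    rw [show e+6-1 = e+5 from by omega] at hS
    -- lower bound on the sum S
    have hsub : ({1,2,3,e+4,e+5} : Finset ℕ) ⊆ Finset.Icc 1 (e+5) := by
      intro x hx
      simp only [Finset.mem_insert, Finset.mem_singleton] at hx
      simp only [Finset.mem_Icc]; omega
    have hTlow := Finset.sum_le_sum_of_subset (f := fun k => oddDF (e+6-k) * a k) hsub
    rw [Finset.sum_insert (by simp only [Finset.mem_insert, Finset.mem_singleton]; omega),
      Finset.sum_insert (by simp only [Finset.mem_insert, Finset.mem_singleton]; omega),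
      Finset.sum_insert (by simp only [Finset.mem_insert, Finset.mem_singleton]; omega),
      Finset.sum_insert (by simp only [Finset.mem_singleton]; omega),
      Finset.sum_singleton] at hTlow
    simp only [show e+6-1 = e+5 from by omega, show e+6-2 = e+4 from by omega,
      show e+6-3 = e+3 from by omega, show e+6-(e+4) = 2 from by omega,
      show e+6-(e+5) = 1 from by omega, h1, ha2, ha3, oddDF_one, oddDF_two,
      mul_one, one_mul] at hTlow
    -- coefficient identities
    have c1 : (oddDF (e+4) + oddDF (e+3) * (2*e+8) + (e+1) * ((3 * oddDF (e+2)) * (2*e+4)))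
        + 3 * (oddDF (e+3) + (e+2) * (oddDF (e+2) * (2*e+4)))
        + (42*e+99) * oddDF (e+2) = 5 * oddDF (e+4) + 10 * oddDF (e+3) := by
      rw [p2, p1]; ring
    have cpos : 0 < (42*e+99) * oddDF (e+2) :=
      Nat.mul_pos (by omega) (oddDF_pos _)
    have q1 : oddDF (e+6) = (2*e+9)^2 * oddDF (e+4) + 2 * oddDF (e+5) := by
      rw [p4, p3]; ring
    have hq : ((2*e+9)^2+1) * oddDF (e+4) = (2*e+9)^2 * oddDF (e+4) + oddDF (e+4) := by ring
    have hP : 0 < (2*e+9)^2 * oddDF (e+4) := Nat.mul_pos (by positivity) (oddDF_pos _)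
    omega
end
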